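/- arXiv:2105.09631 — 2 statements merged into one kernel-verified Lean document; each statement's English description precedes it below -/
import Mathlib

section
/- For complex α, β near 0 with ℜ(α) < 0, the series Σ_{n=0}^{∞} (α+1)_n (α-β+1)_n / ((α-β+2)_n n!) converges to Γ(α-β+2)Γ(-α)/Γ(1-β), where (x)_n denotes the Pochhammer symbol x(x+1)⋯(x+n-1). -/
open Complex MeasureTheory Set Filter Finset

noncomputable def bc (a : ℂ) (n : ℕ) : ℂ := (ascPochhammer ℂ n).eval a / n.factorial

lemma bc_zero (a : ℂ) : bc a 0 = 1 := by simp [bc]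

lemma bc_succ (a : ℂ) (n : ℕ) : bc a (n+1) = bc a n * (a + n) / (n+1) := by
  have h1 : ((n.factorial : ℂ)) ≠ 0 := Nat.cast_ne_zero.mpr n.factorial_ne_zero
  have h2 : ((n : ℂ) + 1) ≠ 0 := Nat.cast_add_one_ne_zero n
  simp only [bc, ascPochhammer_succ_eval, Nat.factorial_succ, Nat.cast_mul, Nat.cast_add,
    Nat.cast_one]
  field_simp

lemma bc_rec (a : ℂ) (n : ℕ) : ((n : ℂ) + 1) * bc a (n+1) = bc a n * (a + n) := by
  have h2 : ((n : ℂ) + 1) ≠ 0 := Nat.cast_add_one_ne_zero n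
  rw [bc_succ]
  field_simp

lemma norm_bc_succ (a : ℂ) (n : ℕ) :
    ‖bc a (n+1)‖ = ‖bc a n‖ * ‖a + n‖ / (n+1) := by
  rw [bc_succ, norm_div, norm_mul]
  congr 1
  have : ((n : ℂ) + 1) = ((n+1 : ℕ) : ℂ) := by push_cast; ring
  rw [this, Complex.norm_natCast]
  push_cast; ring

lemma summable_aux (a : ℂ) {r : ℝ} (h0 : 0 ≤ r) (h1 : r < 1) :
    Summable (fun n : ℕ => ‖bc a n‖ * (n+1) * r ^ n) := by
  set q : ℝ := (1 + r) / 2 with hq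
  have hrq : r < q := by rw [hq]; linarith
  have hq1 : q < 1 := by rw [hq]; linarith
  have hq0 : 0 < q - r := by linarith
  apply summable_of_ratio_norm_eventually_le hq1
  have key : ∀ᶠ n : ℕ in atTop,
      r * ((‖a‖ + n) * (n + 2)) ≤ q * ((n+1) * (n+1)) := by
    filter_upwards [eventually_ge_atTop (⌈(3*‖a‖ + 2)/(q - r)⌉₊ + 1)] with n hn
    have hna : 0 ≤ ‖a‖ := norm_nonneg a
    have hnn : (0:ℝ) ≤ (n:ℝ) := Nat.cast_nonneg n
    have h3 : ((3*‖a‖ + 2)/(q - r)) ≤ n := by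
      calc ((3*‖a‖ + 2)/(q - r)) ≤ (⌈(3*‖a‖ + 2)/(q - r)⌉₊ : ℝ) := Nat.le_ceil _
        _ ≤ n := by exact_mod_cast le_trans (Nat.le_succ _) hn
    have h4 : 3*‖a‖ + 2 ≤ (q - r) * n := by
      rw [div_le_iff₀ hq0] at h3; linarith
    have h5 : r * (‖a‖*n + 2*‖a‖ - 1) ≤ ‖a‖*n + 2*‖a‖ := by
      nlinarith [mul_nonneg (sub_nonneg.mpr h1.le) (by positivity : (0:ℝ) ≤ ‖a‖*n + 2*‖a‖)]
    have h6 : (3*‖a‖ + 2) * ((n:ℝ)+1) ≤ (q - r) * (n * (n+1)) := by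
      nlinarith [mul_le_mul_of_nonneg_right h4 (by linarith : (0:ℝ) ≤ (n:ℝ) + 1)]
    have h7 : (q - r) * (n * (n+1)) ≤ (q - r) * ((n+1) * (n+1)) := by
      apply mul_le_mul_of_nonneg_left _ hq0.le
      nlinarith
    have h8 : ‖a‖*n + 2*‖a‖ ≤ (3*‖a‖ + 2) * ((n:ℝ)+1) := by nlinarith
    nlinarith
  filter_upwards [key] with n hkey
  rw [Real.norm_of_nonneg (by positivity), Real.norm_of_nonneg (by positivity)]
  push_cast
  rw [norm_bc_succ]
  have hne : (0:ℝ) < (n:ℝ) + 1 := by positivity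
  rw [div_mul_eq_mul_div, div_mul_eq_mul_div, div_le_iff₀ hne]
  have han : ‖a + (n:ℂ)‖ ≤ ‖a‖ + n := by
    calc ‖a + (n:ℂ)‖ ≤ ‖a‖ + ‖(n:ℂ)‖ := norm_add_le _ _
      _ = ‖a‖ + n := by rw [Complex.norm_natCast]
  calc ‖bc a n‖ * ‖a + (n:ℂ)‖ * ((n:ℝ) + 1 + 1) * r ^ (n + 1)
      = (r * ((‖a + (n:ℂ)‖) * ((n:ℝ) + 2))) * (‖bc a n‖ * r ^ n) := by ring
    _ ≤ (q * (((n:ℝ)+1) * ((n:ℝ)+1))) * (‖bc a n‖ * r ^ n) := by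
        apply mul_le_mul_of_nonneg_right _ (by positivity)
        calc r * ((‖a + (n:ℂ)‖) * ((n:ℝ) + 2)) ≤ r * ((‖a‖ + n) * ((n:ℝ) + 2)) := by
              apply mul_le_mul_of_nonneg_left _ h0
              apply mul_le_mul_of_nonneg_right han (by linarith)
          _ ≤ q * (((n:ℝ)+1) * ((n:ℝ)+1)) := hkey
    _ = q * (‖bc a n‖ * ((n:ℝ) + 1) * r ^ n) * ((n:ℝ)+1) := by ring


set_option maxHeartbeats 1000000 in
lemma binomial_hasSum (a : ℂ) {x : ℝ} (hx : |x| < 1) :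
    HasSum (fun n : ℕ => bc a n * (x:ℝ)^n) ((1 - (x:ℂ)) ^ (-a)) := by
  set r : ℝ := (1 + |x|) / 2 with hrdef
  have hxa : 0 ≤ |x| := abs_nonneg x
  have hr0 : 0 < r := by rw [hrdef]; linarith
  have hr1 : r < 1 := by rw [hrdef]; linarith
  have hxr : |x| < r := by rw [hrdef]; linarith
  set t : Set ℝ := Ioo (-r) r with htdef
  have ht : IsOpen t := isOpen_Ioo
  have h't : IsPreconnected t := (convex_Ioo _ _).isPreconnected
  have hmem : ∀ {y : ℝ}, y ∈ t → |y| < r := by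
    intro y hy
    rw [abs_lt]; exact ⟨hy.1, hy.2⟩
  have hxt : x ∈ t := by rw [htdef, Set.mem_Ioo, ← abs_lt]; exact hxr
  have h0t : (0:ℝ) ∈ t := by rw [htdef, Set.mem_Ioo]; constructor <;> linarith
  set g : ℕ → ℝ → ℂ := fun n y => (y^n : ℝ) • bc a n with hgdef
  set g' : ℕ → ℝ → ℂ := fun n y => ((n : ℝ) * y^(n-1) : ℝ) • bc a n with hg'def
  set u : ℕ → ℝ := fun n => ((n : ℝ) * r^(n-1)) * ‖bc a n‖ with hudef
  have hu : Summable u := by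
    apply Summable.of_nonneg_of_le (fun n => by positivity)
      (f := fun n => r⁻¹ * (‖bc a n‖ * (n+1) * r ^ n)) _
      ((summable_aux a hr0.le hr1).mul_left r⁻¹)
    intro n
    rw [hudef]
    dsimp only
    rcases n with _ | m
    · simp; positivity
    · have heq : ((m+1 : ℕ) : ℝ) * r ^ (m + 1 - 1) * ‖bc a (m+1)‖
          = r⁻¹ * (‖bc a (m+1)‖ * ((m:ℝ)+1) * r ^ (m+1)) := by
        rw [pow_succ]
        push_cast
        field_simp
      rw [heq]
      apply mul_le_mul_of_nonneg_left _ (by positivity)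
      apply mul_le_mul_of_nonneg_right _ (by positivity)
      apply mul_le_mul_of_nonneg_left _ (norm_nonneg _)
      push_cast; linarith
  have hg : ∀ (n : ℕ) (y : ℝ), y ∈ t → HasDerivAt (g n) (g' n y) y := by
    intro n y _
    exact (hasDerivAt_pow n y).smul_const (bc a n)
  have hg' : ∀ (n : ℕ) (y : ℝ), y ∈ t → ‖g' n y‖ ≤ u n := by
    intro n y hy
    rw [hg'def, hudef]
    simp only [norm_smul, Real.norm_eq_abs, abs_mul, _root_.abs_pow, Nat.abs_cast]
    apply mul_le_mul_of_nonneg_right _ (norm_nonneg _)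
    apply mul_le_mul_of_nonneg_left _ (Nat.cast_nonneg n)
    exact pow_le_pow_left₀ (abs_nonneg y) (hmem hy).le _
  have hg0 : Summable fun n => g n 0 := by
    apply summable_of_ne_finset_zero (s := {0})
    intro n hn
    simp only [Finset.mem_singleton] at hn
    simp [hgdef, zero_pow hn]
  have hderiv : ∀ y ∈ t, HasDerivAt (fun z => ∑' n, g n z) (∑' n, g' n y) y :=
    fun y hy => hasDerivAt_tsum_of_isPreconnected hu ht h't hg hg' h0t hg0 hy
  have hsummable : ∀ y ∈ t, Summable (fun n => g n y) :=
    fun y hy => summable_of_summable_hasDerivAt_of_isPreconnected hu ht h't hg hg' h0t hg0 hy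
  set f : ℝ → ℂ := fun z => ∑' n, g n z with hfdef
  -- the ODE : (1-y) f' = a f on t
  have hode : ∀ y ∈ t, (1 - (y:ℂ)) * (∑' n, g' n y) = a * f y := by
    intro y hy
    have hSsum : Summable (fun n => g' n y) :=
      Summable.of_norm_bounded hu (fun n => hg' n y hy)
    set S : ℂ := ∑' n, g' n y with hSdef
    have hS : HasSum (fun n => g' n y) S := hSsum.hasSum
    have hf : HasSum (fun n => g n y) (f y) := (hsummable y hy).hasSum
    have h1 : HasSum (fun n => g' (n+1) y) S := by
      apply (hasSum_nat_add_iff (f := fun n => g' n y) 1).mpr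
      have hz : g' 0 y = 0 := by simp [hg'def]
      simpa [hz] using hS
    have h2 : HasSum (fun n => a * (g n y) + (y:ℂ) * (g' n y)) (a * f y + y * S) :=
      (hf.mul_left a).add (hS.mul_left (y:ℂ))
    have hfun : ∀ n, g' (n+1) y = a * (g n y) + (y:ℂ) * (g' n y) := by
      intro n
      simp only [hg'def, hgdef, Complex.real_smul]
      rcases n with _ | m
      · have h0 := bc_rec a 0
        rw [bc_zero] at h0
        push_cast at h0
        push_cast
        simp only [pow_zero, pow_one, zero_mul, mul_zero,
          one_mul, mul_one, zero_add, add_zero, bc_zero]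
        linear_combination h0
      · have hb := bc_rec a (m+1)
        push_cast at hb
        simp only [Nat.add_sub_cancel]
        push_cast
        calc ((m:ℂ) + 1 + 1) * (y:ℂ)^(m+1) * bc a (m+1+1)
            = (y:ℂ)^(m+1) * (((m:ℂ)+1+1) * bc a (m+1+1)) := by ring
          _ = (y:ℂ)^(m+1) * (bc a (m+1) * (a + ((m:ℂ)+1))) := by
              rw [← hb]
          _ = a * ((y:ℂ)^(m+1) * bc a (m+1))
              + (y:ℂ) * (((m:ℂ)+1) * (y:ℂ)^m * bc a (m+1)) := by
              rw [pow_succ]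
              ring
    rw [show (fun n => g' (n+1) y) = (fun n => a * (g n y) + (y:ℂ) * (g' n y))
      from funext hfun] at h1
    have huniq := h1.unique h2
    linear_combination huniq
  set h : ℝ → ℂ := fun y => ((1:ℂ) - (y:ℂ)) ^ a * f y with hhdef
  have hh : ∀ y ∈ t, HasDerivAt h 0 y := by
    intro y hy
    have hmy := hmem hy
    rw [abs_lt] at hmy
    have h1y : (0:ℝ) < 1 - y := by linarith [hr1]
    have hre : ((1:ℂ) - (y:ℂ)) ∈ Complex.slitPlane := by
      apply Complex.mem_slitPlane_iff.mpr
      left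
      simp only [Complex.sub_re, Complex.one_re, Complex.ofReal_re]
      linarith
    have hne : (1 : ℂ) - (y:ℂ) ≠ 0 := Complex.slitPlane_ne_zero hre
    have hbase' : HasDerivAt (fun z : ℝ => (1 : ℂ) - (z:ℂ)) (-1) y := by
      have h1 : HasDerivAt (fun z : ℝ => (z : ℂ)) 1 y := by
        simpa using (hasDerivAt_id y).ofReal_comp
      simpa using h1.const_sub 1
    have hcpC : HasDerivAt (fun w : ℂ => ((1:ℂ) - w) ^ a)
        (a * ((1:ℂ) - (y:ℂ)) ^ (a - 1) * (-1)) (y:ℂ) :=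
      HasDerivAt.cpow_const ((hasDerivAt_id ((y:ℝ):ℂ)).const_sub 1) hre
    have hcp : HasDerivAt (fun z : ℝ => ((1:ℂ) - (z:ℂ)) ^ a)
        (a * ((1:ℂ) - (y:ℂ)) ^ (a - 1) * (-1)) y := hcpC.comp_ofReal
    have hfd : HasDerivAt f (∑' n, g' n y) y := hderiv y hy
    have hmul := hcp.mul hfd
    have hod := hode y hy
    refine hmul.congr_deriv ?_
    symm
    have hsplit : ((1:ℂ) - (y:ℂ)) ^ a = ((1:ℂ) - (y:ℂ)) ^ (a - 1) * ((1:ℂ) - (y:ℂ)) := by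
      conv_lhs => rw [show a = (a - 1) + 1 by ring]
      rw [Complex.cpow_add _ _ hne, Complex.cpow_one]
    rw [hsplit]
    linear_combination (-(((1:ℂ) - (y:ℂ)) ^ (a - 1))) * hod
  have hconst : h x = h 0 := by
    apply (convex_Ioo (-r) r).is_const_of_fderivWithin_eq_zero
      (fun y hy => ((hh y hy).differentiableAt).differentiableWithinAt) _ hxt h0t
    intro y hy
    rw [fderivWithin_of_isOpen ht hy]
    have h2 := (hh y hy).hasFDerivAt
    rw [show ContinuousLinearMap.toSpanSingleton ℝ (0:ℂ) = 0 by
      ext z; simp] at h2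
    exact h2.fderiv
  have hf0 : f 0 = 1 := by
    show (∑' n, g n 0) = 1
    rw [tsum_eq_single 0 (fun n hn => by simp [hgdef, zero_pow hn])]
    simp [hgdef, bc_zero]
  have hh0 : h 0 = 1 := by
    rw [hhdef]
    simp only [Complex.ofReal_zero, sub_zero, Complex.one_cpow, one_mul, hf0]
  have hxne : (1 : ℂ) - (x:ℂ) ≠ 0 := by
    intro hc
    have h2 : ((1 - x : ℝ) : ℂ) = 0 := by push_cast; linear_combination hc
    rw [Complex.ofReal_eq_zero] at h2
    rw [abs_lt] at hx
    linarith
  have hfx : f x = ((1:ℂ) - (x:ℂ)) ^ (-a) := by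
    have hc : ((1:ℂ) - (x:ℂ)) ^ a * f x = 1 := hconst.trans hh0
    rw [Complex.cpow_neg]
    exact ((inv_eq_of_mul_eq_one_right hc).symm)
  have H : HasSum (fun n => g n x) (((1:ℂ) - (x:ℂ)) ^ (-a)) := by
    rw [← hfx]
    exact (hsummable x hxt).hasSum
  simpa [hgdef, Complex.real_smul, mul_comm] using H


lemma poch_real_pos {σ : ℝ} (hσ : 0 < σ) (n : ℕ) : 0 < (ascPochhammer ℝ n).eval σ := by
  induction n with
  | zero => simp
  | succ m ih =>
    rw [ascPochhammer_succ_eval]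
    have : (0:ℝ) < σ + m := by positivity
    positivity

lemma harmonic_ge_log (n : ℕ) : Real.log (n+1) ≤ ∑ k ∈ range n, (1:ℝ)/(k+1) := by
  induction n with
  | zero => simp
  | succ m ih =>
    rw [Finset.sum_range_succ]
    have h1 : (0:ℝ) < m + 1 := by positivity
    have h2 : (0:ℝ) < m + 2 := by positivity
    have key : Real.log ((m:ℝ)+2) - Real.log ((m:ℝ)+1) ≤ 1/((m:ℝ)+1) := by
      rw [← Real.log_div h2.ne' h1.ne']
      have := Real.log_le_sub_one_of_pos (show (0:ℝ) < ((m:ℝ)+2)/((m:ℝ)+1) by positivity)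
      calc Real.log (((m:ℝ)+2)/((m:ℝ)+1)) ≤ ((m:ℝ)+2)/((m:ℝ)+1) - 1 := this
        _ = 1/((m:ℝ)+1) := by field_simp; norm_num
    push_cast
    push_cast at ih
    rw [show ((m:ℝ)+1+1) = (m:ℝ)+2 by ring]
    linarith
  
lemma invsq_sum_le {σ : ℝ} (hσ : 1/2 ≤ σ) (n : ℕ) :
    ∑ k ∈ range n, 1/(σ+k)^2 ≤ 6 - 4/((n:ℝ)+1) := by
  induction n with
  | zero => norm_num
  | succ m ih =>
    rw [Finset.sum_range_succ]
    have hm : (0:ℝ) < σ + m := by positivity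
    rcases Nat.eq_zero_or_pos m with hm0 | hm1
    · subst hm0
      simp only [Finset.range_zero, Finset.sum_empty, Nat.cast_zero, add_zero, zero_add,
        Nat.cast_one]
      have h1 : (1/2:ℝ)^2 ≤ σ^2 := by nlinarith
      have h2 : (σ^2)⁻¹ ≤ 4 := by
        rw [← one_div, div_le_iff₀ (by nlinarith)]
        nlinarith
      norm_num
      linarith
    · have hm1' : (1:ℝ) ≤ m := by exact_mod_cast hm1
      have key : 1/(σ+m)^2 ≤ 4/((m+1)*(m+2)) := by
        rw [div_le_div_iff₀ (by positivity) (by positivity)]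
        nlinarith
      have h3 : 4/(((m:ℝ)+1)*((m:ℝ)+2)) = 4/((m:ℝ)+1) - 4/((m:ℝ)+2) := by
        field_simp
        ring
      push_cast
      push_cast at ih
      rw [show ((m:ℝ)+1+1) = (m:ℝ)+2 by ring]
      linarith [h3 ▸ key]

lemma poch_div_factorial_le {σ : ℝ} (h0 : 0 < σ) (h1 : σ ≤ 1) (n : ℕ) :
    (ascPochhammer ℝ n).eval σ / n.factorial ≤ ((n:ℝ)+1) ^ (σ - 1) := by
  have key : ∀ m : ℕ, (ascPochhammer ℝ m).eval σ ≤
      m.factorial * Real.exp ((σ-1) * ∑ k ∈ range m, (1:ℝ)/(k+1)) := by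
    intro m
    induction m with
    | zero => simp
    | succ p ih =>
      rw [ascPochhammer_succ_eval, Finset.sum_range_succ, mul_add (σ-1), Real.exp_add]
      have hfac : (0:ℝ) < p.factorial := by positivity
      have hstep : σ + p ≤ ((p:ℝ)+1) * Real.exp ((σ-1) * (1/((p:ℝ)+1))) := by
        have hp1 : (0:ℝ) < (p:ℝ)+1 := by positivity
        have := Real.add_one_le_exp ((σ-1) * (1/((p:ℝ)+1)))
        have h2 : ((p:ℝ)+1) * ((σ-1) * (1/((p:ℝ)+1)) + 1) ≤
            ((p:ℝ)+1) * Real.exp ((σ-1) * (1/((p:ℝ)+1))) :=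
          mul_le_mul_of_nonneg_left this hp1.le
        calc σ + p = ((p:ℝ)+1) * ((σ-1) * (1/((p:ℝ)+1)) + 1) := by field_simp; ring
          _ ≤ _ := h2
      have hpos : 0 ≤ (ascPochhammer ℝ p).eval σ := (poch_real_pos h0 p).le
      calc (ascPochhammer ℝ p).eval σ * (σ + p)
          ≤ (p.factorial * Real.exp ((σ-1) * ∑ k ∈ range p, (1:ℝ)/(k+1))) * (σ + p) := by
            apply mul_le_mul_of_nonneg_right ih (by positivity)
        _ ≤ (p.factorial * Real.exp ((σ-1) * ∑ k ∈ range p, (1:ℝ)/(k+1))) *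
            (((p:ℝ)+1) * Real.exp ((σ-1) * (1/((p:ℝ)+1)))) := by
            apply mul_le_mul_of_nonneg_left hstep (by positivity)
        _ = (p+1).factorial * (Real.exp ((σ-1) * ∑ k ∈ range p, (1:ℝ)/(k+1)) *
            Real.exp ((σ-1) * (1/((p:ℝ)+1)))) := by
            rw [Nat.factorial_succ]
            push_cast
            ring
    
  have h2 : Real.exp ((σ-1) * ∑ k ∈ range n, (1:ℝ)/(k+1)) ≤ ((n:ℝ)+1) ^ (σ - 1) := by
    rw [Real.rpow_def_of_pos (by positivity : (0:ℝ) < (n:ℝ)+1)]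
    apply Real.exp_le_exp.mpr
    have hlog := harmonic_ge_log n
    have hσ1 : σ - 1 ≤ 0 := by linarith
    nlinarith [hlog]
  rw [div_le_iff₀ (by positivity : (0:ℝ) < (n.factorial:ℝ))]
  calc (ascPochhammer ℝ n).eval σ ≤ n.factorial * Real.exp ((σ-1) * ∑ k ∈ range n, (1:ℝ)/(k+1)) := key n
    _ ≤ n.factorial * (((n:ℝ)+1) ^ (σ - 1)) := by
        apply mul_le_mul_of_nonneg_left h2 (by positivity)
    _ = ((n:ℝ)+1) ^ (σ - 1) * n.factorial := by ring

lemma norm_poch_le {a : ℂ} (h1 : 1/2 ≤ a.re) (h2 : |a.im| ≤ 1) (n : ℕ) :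
    ‖(ascPochhammer ℂ n).eval a‖ ≤ Real.exp 3 * (ascPochhammer ℝ n).eval a.re := by
  set σ := a.re with hσ
  have hσ0 : 0 < σ := by linarith
  have key : ∀ m : ℕ, ‖(ascPochhammer ℂ m).eval a‖ ≤
      Real.exp (∑ k ∈ range m, 1/(2*(σ+k)^2)) * (ascPochhammer ℝ m).eval σ := by
    intro m
    induction m with
    | zero => simp
    | succ p ih =>
      rw [ascPochhammer_succ_eval, ascPochhammer_succ_eval, Finset.sum_range_succ,
        Real.exp_add, norm_mul]
      have hp : (0:ℝ) < σ + p := by positivity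
      have hfact : ‖a + (p:ℂ)‖ ≤ (σ + p) * Real.exp (1/(2*(σ+p)^2)) := by
        have hnorm : ‖a + (p:ℂ)‖ = Real.sqrt ((σ+p)^2 + a.im^2) := by
          rw [Complex.norm_def, Complex.normSq_apply]
          congr 1
          simp only [Complex.add_re, Complex.add_im, Complex.natCast_re, Complex.natCast_im]
          ring
        have him2 : a.im^2 ≤ 1 := by nlinarith [abs_nonneg a.im, _root_.sq_abs a.im]
        have hs1 : Real.sqrt ((σ+p)^2 + a.im^2) ≤ Real.sqrt ((σ+p)^2 + 1) :=
          Real.sqrt_le_sqrt (by linarith)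
        have hs2 : Real.sqrt ((σ+p)^2 + 1) ≤ (σ+p) + 1/(2*(σ+p)) := by
          rw [show (σ+p) + 1/(2*(σ+p)) = Real.sqrt (((σ+p) + 1/(2*(σ+p)))^2) from
            (Real.sqrt_sq (by positivity)).symm]
          apply Real.sqrt_le_sqrt
          have ht : (σ+(p:ℝ)) * (1/(2*(σ+(p:ℝ)))) = 1/2 := by field_simp
          nlinarith [ht, sq_nonneg (1/(2*(σ+(p:ℝ))))]
        have hs3 : (σ+p) + 1/(2*(σ+p)) ≤ (σ+p) * Real.exp (1/(2*(σ+p)^2)) := by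
          have hexp := Real.add_one_le_exp (1/(2*(σ+p)^2))
          have := mul_le_mul_of_nonneg_left hexp hp.le
          calc (σ+p) + 1/(2*(σ+p)) = (σ+p) * (1/(2*(σ+p)^2) + 1) := by
                field_simp; ring
            _ ≤ (σ+p) * Real.exp (1/(2*(σ+p)^2)) := this
        rw [hnorm]
        exact le_trans hs1 (le_trans hs2 hs3)
      have hpochnn : (0:ℝ) ≤ (ascPochhammer ℝ p).eval σ := (poch_real_pos hσ0 p).le
      calc ‖(ascPochhammer ℂ p).eval a‖ * ‖a + (p:ℂ)‖
          ≤ (Real.exp (∑ k ∈ range p, 1/(2*(σ+k)^2)) * (ascPochhammer ℝ p).eval σ) *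
            ((σ + p) * Real.exp (1/(2*(σ+p)^2))) := by
            apply mul_le_mul ih hfact (norm_nonneg _) (by positivity)
        _ = Real.exp (∑ k ∈ range p, 1/(2*(σ+k)^2)) * Real.exp (1/(2*(σ+p)^2)) *
            ((ascPochhammer ℝ p).eval σ * (σ + p)) := by ring
  have hsum : ∀ m : ℕ, (∑ k ∈ range m, 1/(2*(σ+k)^2)) ≤ 3 := by
    intro m
    have := invsq_sum_le h1 m
    have h4 : (0:ℝ) < 4/((m:ℝ)+1) := by positivity
    have heq : ∑ k ∈ range m, 1/(2*(σ+k)^2) = (1/2) * ∑ k ∈ range m, 1/(σ+k)^2 := by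
      rw [Finset.mul_sum]
      congr 1
      funext k
      field_simp
    rw [heq]
    linarith
  calc ‖(ascPochhammer ℂ n).eval a‖
      ≤ Real.exp (∑ k ∈ range n, 1/(2*(σ+k)^2)) * (ascPochhammer ℝ n).eval σ := key n
    _ ≤ Real.exp 3 * (ascPochhammer ℝ n).eval σ := by
        apply mul_le_mul_of_nonneg_right _ (poch_real_pos hσ0 n).le
        exact Real.exp_le_exp.mpr (hsum n)

lemma bc_norm_le {a : ℂ} (h1 : 1/2 ≤ a.re) (h1' : a.re ≤ 1) (h2 : |a.im| ≤ 1) (n : ℕ) :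
    ‖bc a n‖ ≤ Real.exp 3 * ((n:ℝ)+1) ^ (a.re - 1) := by
  have hσ0 : 0 < a.re := by linarith
  rw [bc, norm_div, Complex.norm_natCast]
  have hfac : (0:ℝ) < n.factorial := by positivity
  rw [div_le_iff₀ hfac]
  calc ‖(ascPochhammer ℂ n).eval a‖ ≤ Real.exp 3 * (ascPochhammer ℝ n).eval a.re :=
      norm_poch_le h1 h2 n
    _ ≤ Real.exp 3 * (((n:ℝ)+1) ^ (a.re - 1) * n.factorial) := by
        apply mul_le_mul_of_nonneg_left _ (Real.exp_nonneg 3)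
        rw [← div_le_iff₀ hfac]
        exact poch_div_factorial_le hσ0 h1' n
    _ = Real.exp 3 * ((n:ℝ)+1) ^ (a.re - 1) * n.factorial := by ring


lemma integral_Ioo_cpow {s : ℂ} (hs : 0 < s.re) :
    ∫ x in Ioo (0:ℝ) 1, (x:ℂ) ^ (s - 1) = 1 / s := by
  have hs0 : s ≠ 0 := by
    intro h; rw [h] at hs; simp at hs
  have hG : Complex.Gamma s ≠ 0 := Complex.Gamma_ne_zero_of_re_pos hs
  have hB := Complex.Gamma_mul_Gamma_eq_betaIntegral hs (by simp : 0 < (1:ℂ).re)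
  rw [Complex.Gamma_one, mul_one, Complex.Gamma_add_one s hs0] at hB
  have h1 : Complex.betaIntegral s 1 = ∫ x in Ioo (0:ℝ) 1, (x:ℂ)^(s-1) := by
    rw [Complex.betaIntegral, intervalIntegral.integral_of_le zero_le_one,
      MeasureTheory.integral_Ioc_eq_integral_Ioo]
    simp only [sub_self, Complex.cpow_zero, mul_one]
  rw [← h1]
  have hkey : Complex.Gamma s * (s * Complex.betaIntegral s 1) = Complex.Gamma s * 1 := by
    rw [mul_one]
    calc Complex.Gamma s * (s * Complex.betaIntegral s 1)
        = s * Complex.Gamma s * Complex.betaIntegral s 1 := by ring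
      _ = Complex.Gamma s := hB.symm
  have h2 := mul_left_cancel₀ hG hkey
  field_simp
  linear_combination h2

lemma integrableOn_Ioo_cpow {s : ℂ} (hs : 0 < s.re) :
    IntegrableOn (fun x : ℝ => (x:ℂ) ^ (s - 1)) (Ioo 0 1) := by
  have h := Complex.betaIntegral_convergent hs (by simp : 0 < (1:ℂ).re)
  simp only [sub_self, Complex.cpow_zero, mul_one] at h
  rw [intervalIntegrable_iff_integrableOn_Ioc_of_le zero_le_one] at h
  exact h.mono_set Ioo_subset_Ioc_self

lemma gauss_key {a b : ℂ} (ha1 : 1/2 ≤ a.re) (ha2 : a.re < 1) (ha3 : |a.im| ≤ 1)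
    (hb1 : 1/2 ≤ b.re) :
    HasSum (fun n : ℕ => b * bc a n / (b + n))
      (Complex.Gamma (b+1) * Complex.Gamma (1-a) / Complex.Gamma (b+1-a)) := by
  set F : ℕ → ℝ → ℂ := fun n x => b * bc a n * (x:ℂ) ^ (b + n - 1) with hF
  have hbn : ∀ n : ℕ, 0 < (b + (n:ℂ)).re := by
    intro n
    simp only [Complex.add_re, Complex.natCast_re]
    have := Nat.cast_nonneg (α := ℝ) n
    linarith
  have hint : ∀ n : ℕ, IntegrableOn (fun x : ℝ => F n x) (Ioo 0 1) := by
    intro n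
    have := (integrableOn_Ioo_cpow (hbn n)).const_mul (b * bc a n)
    exact this
  have heval : ∀ n : ℕ, ∫ x in Ioo (0:ℝ) 1, F n x = b * bc a n / (b + n) := by
    intro n
    rw [hF]
    dsimp only
    rw [MeasureTheory.integral_const_mul, integral_Ioo_cpow (hbn n), mul_one_div]
  have hnorm : ∀ n : ℕ, ∫ x in Ioo (0:ℝ) 1, ‖F n x‖
      = ‖b‖ * ‖bc a n‖ * (1/(b.re + n)) := by
    intro n
    have hre : (b + (n:ℂ) - 1).re = b.re + n - 1 := by simp
    have hcn : (0:ℝ) ≤ (n:ℝ) := Nat.cast_nonneg n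
    have heqon : EqOn (fun x : ℝ => ‖F n x‖)
        (fun x : ℝ => (‖b‖ * ‖bc a n‖) * x ^ (b.re + (n:ℝ) - 1)) (Ioo 0 1) := by
      intro x hx
      rw [hF]
      dsimp only
      rw [norm_mul, norm_mul]
      rw [show ‖(x:ℂ) ^ (b + (n:ℂ) - 1)‖ = x ^ (b.re + (n:ℝ) - 1) by
        rw [Complex.norm_cpow_eq_rpow_re_of_pos hx.1, hre]]
    rw [setIntegral_congr_fun measurableSet_Ioo heqon, MeasureTheory.integral_const_mul]
    have hio : ∫ x in Ioo (0:ℝ) 1, x ^ (b.re + (n:ℝ) - 1) = 1/(b.re + n) := by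
      rw [← MeasureTheory.integral_Ioc_eq_integral_Ioo,
        ← intervalIntegral.integral_of_le zero_le_one,
        integral_rpow (Or.inl (by linarith))]
      rw [Real.one_rpow, Real.zero_rpow (by linarith)]
      norm_num
    rw [hio]
  have hsummable : Summable (fun n : ℕ => ∫ x in Ioo (0:ℝ) 1, ‖F n x‖) := by
    have hs2 : Summable (fun n : ℕ => ((n:ℝ)+1) ^ (a.re - 2)) := by
      have h := Real.summable_nat_rpow.mpr (by linarith : a.re - 2 < -1)
      have := (summable_nat_add_iff 1).mpr h
      apply this.congr
      intro n
      push_cast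
      rfl
    refine Summable.of_nonneg_of_le (fun n => integral_nonneg (fun x => norm_nonneg _))
      (fun n => ?_) (hs2.mul_left (2 * ‖b‖ * Real.exp 3))
    rw [hnorm n]
    have hn1 : (0:ℝ) < (n:ℝ) + 1 := by positivity
    have hb2 : 1/(b.re + n) ≤ 2/((n:ℝ)+1) := by
      rw [div_le_div_iff₀ (by
        have := Nat.cast_nonneg (α := ℝ) n
        linarith) hn1]
      have := Nat.cast_nonneg (α := ℝ) n
      linarith
    have hbc := bc_norm_le ha1 ha2.le ha3 n
    have hrp : ((n:ℝ)+1) ^ (a.re - 2) = ((n:ℝ)+1) ^ (a.re - 1) / ((n:ℝ)+1) := by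
      rw [show a.re - 2 = (a.re - 1) - 1 by ring, Real.rpow_sub hn1, Real.rpow_one]
    have hrpos : (0:ℝ) ≤ ((n:ℝ)+1) ^ (a.re - 1) := (Real.rpow_pos_of_pos hn1 _).le
    calc ‖b‖ * ‖bc a n‖ * (1/(b.re + n))
        ≤ ‖b‖ * (Real.exp 3 * ((n:ℝ)+1) ^ (a.re - 1)) * (2/((n:ℝ)+1)) := by
          apply mul_le_mul
          · exact mul_le_mul_of_nonneg_left hbc (norm_nonneg b)
          · exact hb2
          · positivity
          · positivity
      _ = (2 * ‖b‖ * Real.exp 3) * ((n:ℝ)+1) ^ (a.re - 2) := by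
          rw [hrp]
          ring
  have key := MeasureTheory.hasSum_integral_of_summable_integral_norm hint hsummable
  have hpt : ∀ x ∈ Ioo (0:ℝ) 1,
      (∑' n, F n x) = b * ((x:ℂ)^(b-1) * ((1:ℂ)-(x:ℂ))^(-a)) := by
    intro x hx
    have hx1 : |x| < 1 := by rw [abs_of_pos hx.1]; exact hx.2
    have hbs := (binomial_hasSum a hx1).mul_left (b * (x:ℂ)^(b-1))
    have hx0 : (x:ℂ) ≠ 0 := Complex.ofReal_ne_zero.mpr (ne_of_gt hx.1)
    have hfe : ∀ n : ℕ, b * (x:ℂ)^(b-1) * (bc a n * (x:ℂ)^n) = F n x := by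
      intro n
      rw [hF]
      dsimp only
      rw [show (b + (n:ℂ) - 1) = (b - 1) + (n:ℂ) by ring, Complex.cpow_add _ _ hx0,
        Complex.cpow_natCast]
      ring
    rw [show (fun n : ℕ => b * (x:ℂ)^(b-1) * (bc a n * (x:ℂ)^n)) = fun n => F n x
      from funext hfe] at hbs
    rw [hbs.tsum_eq]
    ring
  have hb0 : 0 < b.re := by linarith
  have h1a : 0 < (1 - a).re := by
    simp only [Complex.sub_re, Complex.one_re]
    linarith
  have hba : 0 < (b + 1 - a).re := by
    simp only [Complex.sub_re, Complex.add_re, Complex.one_re]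
    linarith
  have hbne0 : b ≠ 0 := by
    intro h; rw [h] at hb0; simp at hb0
  have hGba : Complex.Gamma (b+1-a) ≠ 0 := Complex.Gamma_ne_zero_of_re_pos hba
  have hG : ∫ x in Ioo (0:ℝ) 1, (∑' n, F n x)
      = Complex.Gamma (b+1) * Complex.Gamma (1-a) / Complex.Gamma (b+1-a) := by
    rw [setIntegral_congr_fun measurableSet_Ioo hpt, MeasureTheory.integral_const_mul]
    have hbeta : ∫ x in Ioo (0:ℝ) 1, (x:ℂ)^(b-1) * ((1:ℂ)-(x:ℂ))^(-a)
        = Complex.betaIntegral b (1-a) := by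
      rw [Complex.betaIntegral, intervalIntegral.integral_of_le zero_le_one,
        MeasureTheory.integral_Ioc_eq_integral_Ioo]
      simp only [show (1:ℂ) - a - 1 = -a by ring]
    rw [hbeta]
    have hBeq := Complex.Gamma_mul_Gamma_eq_betaIntegral hb0 h1a
    rw [show b + (1-a) = b+1-a by ring] at hBeq
    rw [Complex.Gamma_add_one b hbne0]
    field_simp
    linear_combination (-1) * hBeq
  rw [← hG]
  have : (fun n : ℕ => b * bc a n / (b + n)) = fun n : ℕ => ∫ x in Ioo (0:ℝ) 1, F n x :=
    funext (fun n => (heval n).symm)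
  rw [this]
  exact key


lemma poch_eval_succ_left (b : ℂ) (n : ℕ) :
    (ascPochhammer ℂ (n+1)).eval b = b * (ascPochhammer ℂ n).eval (b+1) := by
  rw [ascPochhammer_succ_left]
  simp [Polynomial.eval_comp]

lemma poch_ne_zero {b : ℂ} (hb : 0 < b.re) (n : ℕ) : (ascPochhammer ℂ n).eval b ≠ 0 := by
  induction n with
  | zero => simp
  | succ m ih =>
    rw [ascPochhammer_succ_eval]
    apply mul_ne_zero ih
    intro h
    have h2 : (b + (m:ℂ)).re = 0 := by rw [h]; simp
    simp only [Complex.add_re, Complex.natCast_re] at h2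
    have := Nat.cast_nonneg (α := ℝ) m
    linarith

/-- For complex `α, β` near `0` with `ℜ(α) < 0`, the hypergeometric
series `Σ_n (α+1)_n (α-β+1)_n / ((α-β+2)_n n!)` converges to
`Γ(α-β+2)Γ(-α)/Γ(1-β)` (Gauss's summation theorem). -/
theorem stmt17 :
    ∃ ε > (0 : ℝ), ∀ α β : ℂ, ‖α‖ < ε → ‖β‖ < ε → α.re < 0 →
      HasSum
        (fun n : ℕ =>
          (ascPochhammer ℂ n).eval (α + 1) * (ascPochhammer ℂ n).eval (α - β + 1)
            / ((ascPochhammer ℂ n).eval (α - β + 2) * (n.factorial : ℂ)))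
        (Complex.Gamma (α - β + 2) * Complex.Gamma (-α) / Complex.Gamma (1 - β)) := by
  refine ⟨1/8, by norm_num, fun α β hα hβ hre => ?_⟩
  have hαre : |α.re| < 1/8 := lt_of_le_of_lt (Complex.abs_re_le_norm α) hα
  have hαim : |α.im| < 1/8 := lt_of_le_of_lt (Complex.abs_im_le_norm α) hα
  have hβre : |β.re| < 1/8 := lt_of_le_of_lt (Complex.abs_re_le_norm β) hβ
  rw [abs_lt] at hαre hαim hβre
  have ha1 : 1/2 ≤ (α + 1).re := by
    simp only [Complex.add_re, Complex.one_re]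
    linarith [hαre.1]
  have ha2 : (α + 1).re < 1 := by
    simp only [Complex.add_re, Complex.one_re]
    linarith
  have ha3 : |(α + 1).im| ≤ 1 := by
    simp only [Complex.add_im, Complex.one_im, add_zero]
    rw [abs_le]
    constructor <;> linarith [hαim.1, hαim.2]
  have hb1 : 1/2 ≤ (α - β + 1).re := by
    simp only [Complex.add_re, Complex.sub_re, Complex.one_re]
    linarith [hαre.1, hβre.2]
  have hb0 : 0 < (α - β + 1).re := by linarith
  have key := gauss_key (a := α+1) (b := α-β+1) ha1 ha2 ha3 hb1
  convert key using 1
  · funext n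
    have hP1 : (ascPochhammer ℂ n).eval (α - β + 1) ≠ 0 := poch_ne_zero hb0 n
    have hP2 : (ascPochhammer ℂ n).eval (α - β + 2) ≠ 0 := by
      apply poch_ne_zero _ n
      simp only [Complex.add_re, Complex.sub_re, Complex.one_re, Complex.re_ofNat]
      linarith [hαre.1, hβre.2]
    have hfac : ((n.factorial : ℂ)) ≠ 0 := Nat.cast_ne_zero.mpr n.factorial_ne_zero
    have hbne : (α - β + 1) ≠ 0 := by
      intro h
      rw [h] at hb0
      simp at hb0
    have hbnn : (α - β + 1) + (n:ℂ) ≠ 0 := by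
      intro h
      have h2 : ((α - β + 1) + (n:ℂ)).re = 0 := by rw [h]; simp
      simp only [Complex.add_re, Complex.sub_re, Complex.one_re, Complex.natCast_re] at h2
      have := Nat.cast_nonneg (α := ℝ) n
      linarith
    have hrel : (α - β + 1) * (ascPochhammer ℂ n).eval ((α - β + 1) + 1)
        = (ascPochhammer ℂ n).eval (α - β + 1) * ((α - β + 1) + n) := by
      rw [← poch_eval_succ_left, ascPochhammer_succ_eval]
    have h12 : (α - β + 2) = (α - β + 1) + 1 := by ring
    have hC : (ascPochhammer ℂ n).eval (α - β + 2)
        = (ascPochhammer ℂ n).eval (α - β + 1) * ((α - β + 1) + n) / (α - β + 1) := by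
      rw [h12, eq_div_iff hbne]
      linear_combination hrel
    rw [bc, hC]
    field_simp
  · rw [show α - β + 1 + 1 - (α+1) = 1 - β by ring, show α - β + 1 + 1 = α - β + 2 by ring,
      show (1:ℂ) - (α+1) = -α by ring]
end

section
/- Let ψ : 𝔥¹ → 𝔓 be the injective linear map to quasi-symmetric functions and D_A the continuous ring automorphism of 𝔓[[A]] fixing A and sending t_m^{-1} to (t_m+A)^{-1}. Then for every word u = yx^{k₁-1}⋯yx^{k_d-1} ∈ 𝔥¹, one has ψ(α_A(u)) = D_A(ψ(u)); explicitly, Σ_{e₁,…,e_d≥0} ψ(yx^{k₁+e₁-1}⋯yx^{k_d+e_d-1}) ∏_j C(k_j+e_j-1, e_j)(-A)^{e_j} = Σ_{0<m₁<⋯<m_d} ∏_j (t_{m_j}+A)^{-k_j}. -/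
open scoped BigOperators

/-- The ring `𝔓` of quasi-symmetric functions, realized inside the power series ring in
countably many variables `s_m` (`s_m` representing `t_{m+1}⁻¹`). -/
abbrev QS := MvPowerSeries ℕ ℚ

/-- The monomial quasi-symmetric function
`ψ(yx^{k₁-1}⋯yx^{k_d-1}) = Σ_{m₁<⋯<m_d} t_{m₁}^{-k₁}⋯t_{m_d}^{-k_d}`:
the coefficient of a monomial is `1` exactly when its exponents, read in increasing
variable order, form the list `k`. -/
noncomputable def psiQ (k : List ℕ) : QS := fun μ =>
  if (μ.support.sort (· ≤ ·)).map (fun m => μ m) = k then 1 else 0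

/-- The left-hand side
`ψ(α_A(u)) = Σ_{e₁,…,e_d≥0} ψ(yx^{k₁+e₁-1}⋯yx^{k_d+e_d-1}) ∏_j C(k_j+e_j-1, e_j)(-A)^{e_j}`
as a power series in `A` over `𝔓`. -/
noncomputable def lhs19 (d : ℕ) (k : Fin d → ℕ) : PowerSeries QS :=
  PowerSeries.mk fun n =>
    ((-1 : ℚ) ^ n) •
      ∑ e ∈ Finset.Nat.antidiagonalTuple d n,
        (∏ j, (Nat.choose (k j + e j - 1) (e j) : ℚ)) • psiQ (List.ofFn fun j => k j + e j)

/-- The right-hand side `D_A(ψ(u)) = Σ_{0<m₁<⋯<m_d} ∏_j (t_{m_j}+A)^{-k_j}`, where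
`(t_m+A)^{-k} = Σ_e C(k+e-1,e) t_m^{-(k+e)} (-A)^e`, written coefficientwise: the
coefficient of `Aⁿ` at a monomial `μ` with support `{m₁<⋯<m_d}` and exponents
`μ(m_j) = k_j + e_j`, `Σ e_j = n`, is `(-1)ⁿ ∏_j C(μ(m_j)-1, e_j)`. -/
noncomputable def rhs19 (d : ℕ) (k : Fin d → ℕ) : PowerSeries QS :=
  PowerSeries.mk fun n =>
    (fun μ =>
      let s := μ.support.sort (· ≤ ·)
      if h : s.length = d then
        if (∀ j : Fin d, k j ≤ μ (s.get (Fin.cast h.symm j))) ∧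
            (∑ j : Fin d, (μ (s.get (Fin.cast h.symm j)) - k j)) = n then
          ((-1 : ℚ) ^ n) *
            ∏ j : Fin d,
              (Nat.choose (μ (s.get (Fin.cast h.symm j)) - 1)
                (μ (s.get (Fin.cast h.symm j)) - k j) : ℚ)
        else 0
      else 0 : QS)

/-- For every word `u = yx^{k₁-1}⋯yx^{k_d-1} ∈ 𝔥¹` (all `k_j ≥ 1`),
one has `ψ(α_A(u)) = D_A(ψ(u))` in `𝔓[[A]]`. -/
theorem stmt19 (d : ℕ) (k : Fin d → ℕ) (hk : ∀ j, 1 ≤ k j) :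
    lhs19 d k = rhs19 d k := by
  refine PowerSeries.ext fun n => ?_
  simp only [lhs19, rhs19, PowerSeries.coeff_mk]
  refine MvPowerSeries.ext fun μ => ?_
  rw [map_smul, map_sum]
  simp only [map_smul, smul_eq_mul]
  have hpsi : ∀ l : List ℕ, (MvPowerSeries.coeff (R := ℚ) μ) (psiQ l) =
      (if (μ.support.sort (· ≤ ·)).map (fun m => μ m) = l then (1:ℚ) else 0) := fun _ => rfl
  simp only [hpsi]
  rw [show ∀ f : QS, (MvPowerSeries.coeff (R := ℚ) μ) f = f μ from fun _ => rfl]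
  erw [PowerSeries.coeff_mk]
  set s : List ℕ := μ.support.sort (· ≤ ·) with hsdef
  have hmap : ∀ (hs : s.length = d),
      s.map (fun m => μ m) = List.ofFn (fun j : Fin d => μ (s.get (Fin.cast hs.symm j))) := by
    intro hs
    apply List.ext_get
    · simp [hs]
    · intro i h1 h2
      simp [List.getElem_map, List.get_ofFn, Fin.cast]
  by_cases hs : s.length = d
  · rw [dif_pos hs]
    by_cases hc : (∀ j : Fin d, k j ≤ μ (s.get (Fin.cast hs.symm j))) ∧
        (∑ j : Fin d, (μ (s.get (Fin.cast hs.symm j)) - k j)) = n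
    · rw [if_pos hc]
      set e₀ : Fin d → ℕ := fun j => μ (s.get (Fin.cast hs.symm j)) - k j with he₀
      have he₀mem : e₀ ∈ Finset.Nat.antidiagonalTuple d n := by
        rw [Finset.Nat.mem_antidiagonalTuple]; exact hc.2
      rw [Finset.sum_eq_single_of_mem e₀ he₀mem]
      · have hP : s.map (fun m => μ m) = List.ofFn (fun j => k j + e₀ j) := by
          rw [hmap hs, List.ofFn_inj]
          funext j
          have := hc.1 j
          simp only [he₀]
          omega
        rw [if_pos hP, mul_one]
        congr 1
        refine Finset.prod_congr rfl fun j _ => ?_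
        have h1 := hc.1 j
        have h2 := hk j
        have hA : k j + e₀ j - 1 = μ (s.get (Fin.cast hs.symm j)) - 1 := by
          simp only [he₀]; omega
        rw [hA]
      · intro e he hne
        rw [if_neg, mul_zero]
        intro hP
        apply hne
        rw [hmap hs, List.ofFn_inj] at hP
        funext j
        have := congrFun hP j
        simp only [he₀]
        omega
    · rw [if_neg hc]
      rw [Finset.sum_eq_zero, mul_zero]
      intro e he
      rw [if_neg, mul_zero]
      intro hP
      apply hc
      rw [hmap hs, List.ofFn_inj] at hP
      have hPj : ∀ j, μ (s.get (Fin.cast hs.symm j)) = k j + e j := fun j => congrFun hP j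
      constructor
      · intro j; rw [hPj j]; exact Nat.le_add_right _ _
      · have hsum : (∑ j : Fin d, (μ (s.get (Fin.cast hs.symm j)) - k j)) = ∑ j : Fin d, e j :=
          Finset.sum_congr rfl fun j _ => by have := hPj j; omega
        rw [hsum]
        exact Finset.Nat.mem_antidiagonalTuple.mp he
  · rw [dif_neg hs]
    rw [Finset.sum_eq_zero, mul_zero]
    intro e he
    rw [if_neg, mul_zero]
    intro hP
    apply hs
    have := congrArg List.length hP
    rw [List.length_map, List.length_ofFn] at this
    exact this
end
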